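/- Let n ≥ 1, let M and N each be a direct sum of exactly n staircase modules over ℝ², and let ε ≥ 0. Then there exists a morphism f : M → N^ε with 2ε-trivial cokernel if and only if M and N are ε-interleaved. -/

import Mathlib

structure PersMod (F : Type) [Field F] where
  space : ℝ × ℝ → Type
  [isACG : ∀ p, AddCommGroup (space p)]
  [isMod : ∀ p, Module F (space p)]
  map : ∀ {p q : ℝ × ℝ}, p ≤ q → (space p →ₗ[F] space q)
  map_id : ∀ p : ℝ × ℝ, map (le_refl p) = LinearMap.id
  map_comp : ∀ {p q r : ℝ × ℝ} (hpq : p ≤ q) (hqr : q ≤ r),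
      map hqr ∘ₗ map hpq = map (le_trans hpq hqr)

attribute [instance] PersMod.isACG PersMod.isMod

variable {F : Type} [Field F]

/-- `f` is a morphism of persistence modules `M → N`. -/
def IsHom (M N : PersMod F) (f : ∀ p, M.space p →ₗ[F] N.space p) : Prop :=
  ∀ ⦃p q : ℝ × ℝ⦄ (h : p ≤ q), N.map h ∘ₗ f p = f q ∘ₗ M.map h

/-- `f` is a morphism of persistence modules `M → N^ε` (the `ε`-shift of `N`). -/
def IsHomShift (M N : PersMod F) (ε : ℝ)
    (f : ∀ p : ℝ × ℝ, M.space p →ₗ[F] N.space (p + (ε, ε))) : Prop :=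
  ∀ ⦃p q : ℝ × ℝ⦄ (h : p ≤ q),
    N.map (add_le_add h (le_refl ((ε : ℝ), (ε : ℝ)))) ∘ₗ f p = f q ∘ₗ M.map h

/-- `(f, g)` is an `ε`-interleaving between `M` and `N`. -/
def IsInterleaving (M N : PersMod F) (ε : ℝ)
    (f : ∀ p : ℝ × ℝ, M.space p →ₗ[F] N.space (p + (ε, ε)))
    (g : ∀ p : ℝ × ℝ, N.space p →ₗ[F] M.space (p + (ε, ε))) : Prop :=
  IsHomShift M N ε f ∧ IsHomShift N M ε g ∧
  (∀ (p : ℝ × ℝ) (h : p ≤ p + (ε, ε) + (ε, ε)), g (p + (ε, ε)) ∘ₗ f p = M.map h) ∧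
  (∀ (p : ℝ × ℝ) (h : p ≤ p + (ε, ε) + (ε, ε)), f (p + (ε, ε)) ∘ₗ g p = N.map h)

def upset (a : ℝ × ℝ) : Set (ℝ × ℝ) := {x | a ≤ x}

def IsStaircase (S : Set (ℝ × ℝ)) : Prop :=
  ∃ A : Finset (ℝ × ℝ), A.Nonempty ∧ S = ⋃ a ∈ A, upset a

def UpClosed (U : Set (ℝ × ℝ)) : Prop :=
  ∀ ⦃p q : ℝ × ℝ⦄, p ≤ q → p ∈ U → q ∈ U

theorem IsStaircase.upClosed {S : Set (ℝ × ℝ)} (hS : IsStaircase S) : UpClosed S := by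
  obtain ⟨A, -, rfl⟩ := hS
  intro p q hpq hp
  simp only [Set.mem_iUnion] at hp ⊢
  obtain ⟨a, ha, hpa⟩ := hp
  exact ⟨a, ha, le_trans hpa hpq⟩

open Classical in
/-- The fiber of the staircase module over `U` at `p` : `F` if `p ∈ U`, else `0`,
realized as a submodule of `F`. -/
noncomputable def lineAt (F : Type) [Field F] (U : Set (ℝ × ℝ)) (p : ℝ × ℝ) :
    Submodule F F :=
  if p ∈ U then ⊤ else ⊥

/-- The interval (staircase) module `k_U` of an upward closed set `U`. -/
noncomputable def stairMod (F : Type) [Field F] (U : Set (ℝ × ℝ)) (hU : UpClosed U) :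
    PersMod F where
  space p := ↥(lineAt F U p)
  map {p q} h := Submodule.inclusion (by
    by_cases hp : p ∈ U
    · simp [lineAt, hp, hU h hp]
    · simp [lineAt, hp])
  map_id p := rfl
  map_comp _ _ := rfl

/-- The element `1 ∈ F = (k_U)_p` for `p ∈ U`. -/
noncomputable def unitVec (F : Type) [Field F] (U : Set (ℝ × ℝ)) (p : ℝ × ℝ)
    (hp : p ∈ U) : ↥(lineAt F U p) :=
  ⟨1, by simp [lineAt, hp]⟩

/-- The value in `F` of an element of the fiber of `k_U` at `p`. -/
noncomputable def valAt (F : Type) [Field F] (U : Set (ℝ × ℝ)) (p : ℝ × ℝ) :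
    ↥(lineAt F U p) →ₗ[F] F :=
  (lineAt F U p).subtype

/-- Finite direct sums of persistence modules, defined pointwise. -/
noncomputable def dirSum {n : ℕ} (Ms : Fin n → PersMod F) : PersMod F where
  space p := ∀ i, (Ms i).space p
  map h := LinearMap.pi fun i => (Ms i).map h ∘ₗ LinearMap.proj i
  map_id p := by
    refine LinearMap.ext fun x => funext fun i => ?_
    simp [(Ms i).map_id]
  map_comp hpq hqr := by
    refine LinearMap.ext fun x => funext fun i => ?_
    simpa using LinearMap.congr_fun ((Ms i).map_comp hpq hqr) (x i)

/-- Direct sum of staircase modules. -/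
noncomputable def stairSum (F : Type) [Field F] {n : ℕ} (S : Fin n → Set (ℝ × ℝ))
    (hS : ∀ i, UpClosed (S i)) : PersMod F :=
  dirSum fun i => stairMod F (S i) (hS i)

/-- The `ε`-shift `S^ε = {x - (ε,ε) : x ∈ S}` of a set. -/
def shiftSet (S : Set (ℝ × ℝ)) (ε : ℝ) : Set (ℝ × ℝ) := {x | x + (ε, ε) ∈ S}

/-- The directed shift distance `d_s(S,T) = min {ε ≥ 0 : S ⊆ T^ε}`. -/
noncomputable def dirDist (S T : Set (ℝ × ℝ)) : ℝ :=
  sInf {ε : ℝ | 0 ≤ ε ∧ S ⊆ shiftSet T ε}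

/-- `M`, `N` are `ε`-interleaved. -/
def Interleaved (M N : PersMod F) (ε : ℝ) : Prop :=
  ∃ f g, IsInterleaving M N ε f g

/-- The interleaving distance. -/
noncomputable def interDist (M N : PersMod F) : ℝ :=
  sInf {ε : ℝ | 0 ≤ ε ∧ Interleaved M N ε}

/-- `S` has a finite generating set all of whose members are `≤ u`. -/
theorem upClosed_of_gens {S : Set (ℝ × ℝ)} {u : ℝ × ℝ}
    (h : ∃ A : Finset (ℝ × ℝ), A.Nonempty ∧ S = (⋃ a ∈ A, upset a) ∧ ∀ a ∈ A, a ≤ u) :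
    UpClosed S := by
  obtain ⟨A, hne, hSeq, -⟩ := h
  exact IsStaircase.upClosed ⟨A, hne, hSeq⟩

theorem mem_of_gens {S : Set (ℝ × ℝ)} {u v : ℝ × ℝ}
    (h : ∃ A : Finset (ℝ × ℝ), A.Nonempty ∧ S = (⋃ a ∈ A, upset a) ∧ ∀ a ∈ A, a ≤ u)
    (huv : u ≤ v) : v ∈ S := by
  obtain ⟨A, ⟨a, ha⟩, rfl, hle⟩ := h
  exact Set.mem_biUnion ha (le_trans (hle a ha) huv)

/-- `f : M → N^ε` has `δ`-trivial kernel: the induced map `ker f_p → ker f_{p+(δ,δ)}`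
is zero for all `p`. -/
def TrivialKerS (M N : PersMod F) (ε δ : ℝ)
    (f : ∀ p, M.space p →ₗ[F] N.space (p + (ε, ε))) : Prop :=
  ∀ (p : ℝ × ℝ) (x : M.space p), f p x = 0 → ∀ h : p ≤ p + (δ, δ), M.map h x = 0

/-- `f : M → N^ε` has `δ`-trivial cokernel: the induced map
`coker f_p → coker f_{p+(δ,δ)}` is zero for all `p`. -/
def TrivialCokerS (M N : PersMod F) (ε δ : ℝ)
    (f : ∀ p, M.space p →ₗ[F] N.space (p + (ε, ε))) : Prop :=
  ∀ (p : ℝ × ℝ) (y : N.space (p + (ε, ε))) (h : p + (ε, ε) ≤ p + (δ, δ) + (ε, ε)),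
    ∃ x : M.space (p + (δ, δ)), f (p + (δ, δ)) x = N.map h y

/-- `f : M → N` has `δ`-trivial kernel. -/
def TrivialKer (M N : PersMod F) (δ : ℝ) (f : ∀ p, M.space p →ₗ[F] N.space p) : Prop :=
  ∀ (p : ℝ × ℝ) (x : M.space p), f p x = 0 → ∀ h : p ≤ p + (δ, δ), M.map h x = 0

/-- `f : M → N` has `δ`-trivial cokernel. -/
def TrivialCoker (M N : PersMod F) (δ : ℝ) (f : ∀ p, M.space p →ₗ[F] N.space p) : Prop :=
  ∀ (p : ℝ × ℝ) (y : N.space p) (h : p ≤ p + (δ, δ)),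
    ∃ x : M.space (p + (δ, δ)), f (p + (δ, δ)) x = N.map h y

/-- The interior of an upward closed subset of `ℝ²` is upward closed. -/
theorem upClosed_interior {U : Set (ℝ × ℝ)} (hU : UpClosed U) :
    UpClosed (interior U) := by
  intro p q hpq hp
  have hsub : (fun x : ℝ × ℝ => x - (q - p)) ⁻¹' interior U ⊆ U := fun x hx =>
    hU (sub_le_self x (sub_nonneg.mpr hpq)) (interior_subset hx)
  have hopen : IsOpen ((fun x : ℝ × ℝ => x - (q - p)) ⁻¹' interior U) :=
    isOpen_interior.preimage (continuous_id.sub continuous_const)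
  have hq : q ∈ (fun x : ℝ × ℝ => x - (q - p)) ⁻¹' interior U := by
    show q - (q - p) ∈ interior U
    rwa [sub_sub_cancel]
  exact interior_maximal hsub hopen hq

/-- The dual persistence module: `(M*)_p = (M_{-p})^∨`. -/
noncomputable def dualMod (M : PersMod F) : PersMod F where
  space p := Module.Dual F (M.space (-p))
  map {p q} h := (M.map (neg_le_neg h)).dualMap
  map_id p := by
    have h : M.map (neg_le_neg (le_refl p)) = LinearMap.id := M.map_id (-p)
    ext φ x
    simp [h]
  map_comp hpq hqr := by
    ext φ x
    have h := LinearMap.congr_fun (M.map_comp (neg_le_neg hqr) (neg_le_neg hpq)) x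
    simp only [LinearMap.comp_apply, LinearMap.dualMap_apply] at h ⊢
    rw [h]

section StairAux

variable {F : Type} [Field F]

theorem lineAt_val_eq_zero {U : Set (ℝ × ℝ)} {p : ℝ × ℝ} (hp : p ∉ U)
    (x : ↥(lineAt F U p)) : (x : F) = 0 := by
  have h := x.2
  simp only [lineAt, if_neg hp, Submodule.mem_bot] at h
  exact h

theorem mem_lineAt {U : Set (ℝ × ℝ)} {p : ℝ × ℝ} {v : F} (hv : p ∉ U → v = 0) :
    v ∈ lineAt F U p := by
  by_cases h : p ∈ U
  · simp [lineAt, h]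
  · simp [lineAt, h, hv h]

variable {n : ℕ} {S T : Fin n → Set (ℝ × ℝ)} {hS : ∀ i, UpClosed (S i)}
  {hT : ∀ j, UpClosed (T j)}

/-- the value of the `i`-th component -/
def vl {p : ℝ × ℝ} (x : (stairSum F S hS).space p) (i : Fin n) : F :=
  (x i).1

theorem vl_eq_zero {p : ℝ × ℝ} (x : (stairSum F S hS).space p) {i : Fin n}
    (hp : p ∉ S i) : vl x i = 0 :=
  lineAt_val_eq_zero hp (x i)

theorem vl_zero {p : ℝ × ℝ} (i : Fin n) : vl (0 : (stairSum F S hS).space p) i = 0 := rfl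

theorem vl_smul {p : ℝ × ℝ} (a : F) (x : (stairSum F S hS).space p) (i : Fin n) :
    vl (a • x) i = a * vl x i := rfl

/-- extensionality by values -/
theorem ext_val {p : ℝ × ℝ} {x y : (stairSum F S hS).space p}
    (h : ∀ i, vl x i = vl y i) : x = y :=
  funext fun i => Subtype.ext (h i)

/-- maps of staircase sums preserve values -/
theorem map_val {p q : ℝ × ℝ} (h : p ≤ q) (x : (stairSum F S hS).space p) (i : Fin n) :
    vl ((stairSum F S hS).map h x) i = vl x i := rfl

/-- the value projection as a linear map -/
noncomputable def valP (S : Fin n → Set (ℝ × ℝ)) (hS : ∀ i, UpClosed (S i)) (p : ℝ × ℝ)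
    (i : Fin n) : (stairSum F S hS).space p →ₗ[F] F where
  toFun x := vl x i
  map_add' x y := rfl
  map_smul' a x := rfl

/-- the basis delta element -/
noncomputable def delta (S : Fin n → Set (ℝ × ℝ)) (hS : ∀ i, UpClosed (S i)) (p : ℝ × ℝ)
    (i : Fin n) (hp : p ∈ S i) : (stairSum F S hS).space p :=
  fun i' => ⟨if i' = i then (1 : F) else 0, mem_lineAt (fun h => by
    rcases eq_or_ne i' i with rfl | hne
    · exact absurd hp h
    · simp [hne])⟩

theorem delta_val {p : ℝ × ℝ} {i : Fin n} (hp : p ∈ S i) (i' : Fin n) :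
    vl (delta S hS p i hp) i' = if i' = i then (1:F) else 0 := rfl

end StairAux
section StairAux2

variable {F : Type} [Field F] {n : ℕ} {S T : Fin n → Set (ℝ × ℝ)}
  {hS : ∀ i, UpClosed (S i)} {hT : ∀ j, UpClosed (T j)} {ε : ℝ}

theorem entry_mono (f : ∀ p : ℝ × ℝ,
      (stairSum F S hS).space p →ₗ[F] (stairSum F T hT).space (p + (ε, ε)))
    (hf : IsHomShift (stairSum F S hS) (stairSum F T hT) ε f)
    {p q : ℝ × ℝ} (h : p ≤ q) {i : Fin n} (hp : p ∈ S i) (j : Fin n) :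
    vl (f q (delta S hS q i (hS i h hp))) j = vl (f p (delta S hS p i hp)) j := by
  have hn := LinearMap.congr_fun (hf h) (delta S hS p i hp)
  have hd : (stairSum F S hS).map h (delta S hS p i hp) = delta S hS q i (hS i h hp) :=
    ext_val fun i' => by rw [map_val, delta_val, delta_val]
  rw [LinearMap.comp_apply, LinearMap.comp_apply, hd] at hn
  rw [← hn, map_val]

theorem entry_const (f : ∀ p : ℝ × ℝ,
      (stairSum F S hS).space p →ₗ[F] (stairSum F T hT).space (p + (ε, ε)))
    (hf : IsHomShift (stairSum F S hS) (stairSum F T hT) ε f)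
    {p q : ℝ × ℝ} {i : Fin n} (hp : p ∈ S i) (hq : q ∈ S i) (j : Fin n) :
    vl (f p (delta S hS p i hp)) j = vl (f q (delta S hS q i hq)) j := by
  have h1 := entry_mono f hf (le_sup_left : p ≤ p ⊔ q) hp j
  have h2 := entry_mono f hf (le_sup_right : q ≤ p ⊔ q) hq j
  exact h1.symm.trans h2

/-- the matrix of `f` -/
noncomputable def cMat (f : ∀ p : ℝ × ℝ,
      (stairSum F S hS).space p →ₗ[F] (stairSum F T hT).space (p + (ε, ε)))
    (hSne : ∀ i, (S i).Nonempty) : Matrix (Fin n) (Fin n) F :=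
  Matrix.of fun j i => vl (f (hSne i).choose (delta S hS _ i (hSne i).choose_spec)) j

theorem cMat_eq (f : ∀ p : ℝ × ℝ,
      (stairSum F S hS).space p →ₗ[F] (stairSum F T hT).space (p + (ε, ε)))
    (hf : IsHomShift (stairSum F S hS) (stairSum F T hT) ε f)
    (hSne : ∀ i, (S i).Nonempty) {p : ℝ × ℝ} {i : Fin n} (hp : p ∈ S i) (j : Fin n) :
    vl (f p (delta S hS p i hp)) j = cMat f hSne j i :=
  entry_const f hf hp (hSne i).choose_spec j

/-- matrix action of `f` on values -/
theorem f_apply_val (f : ∀ p : ℝ × ℝ,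
      (stairSum F S hS).space p →ₗ[F] (stairSum F T hT).space (p + (ε, ε)))
    (hf : IsHomShift (stairSum F S hS) (stairSum F T hT) ε f)
    (hSne : ∀ i, (S i).Nonempty) (p : ℝ × ℝ) (x : (stairSum F S hS).space p)
    (j : Fin n) :
    vl (f p x) j = ∑ i, cMat f hSne j i * vl x i := by
  classical
  have hx : x = ∑ i, vl x i • (if h : p ∈ S i then delta S hS p i h else 0) := by
    apply ext_val
    intro i'
    have h1 : valP S hS p i' (∑ i, vl x i • (if h : p ∈ S i then delta S hS p i h else 0))
        = ∑ i, vl x i * vl (if h : p ∈ S i then delta S hS p i h else 0) i' := by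
      rw [map_sum]
      exact Finset.sum_congr rfl fun i _ => by rw [map_smul]; rfl
    refine Eq.symm (h1.trans ?_)
    rw [Finset.sum_eq_single i']
    · by_cases h : p ∈ S i'
      · rw [dif_pos h, delta_val, if_pos rfl, mul_one]
      · rw [dif_neg h, vl_zero, mul_zero, vl_eq_zero x h]
    · intro i _ hne
      by_cases h : p ∈ S i
      · rw [dif_pos h, delta_val, if_neg (Ne.symm hne), mul_zero]
      · rw [dif_neg h, vl_zero, mul_zero]
    · simp
  conv_lhs => rw [hx]
  have h2 : valP T hT (p + (ε,ε)) j
        ((f p) (∑ i, vl x i • (if h : p ∈ S i then delta S hS p i h else 0)))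
      = ∑ i, vl x i * vl (f p (if h : p ∈ S i then delta S hS p i h else 0)) j := by
    rw [map_sum, map_sum]
    exact Finset.sum_congr rfl fun i _ => by rw [map_smul, map_smul]; rfl
  refine h2.trans ?_
  refine Finset.sum_congr rfl fun i _ => ?_
  by_cases h : p ∈ S i
  · rw [dif_pos h, cMat_eq f hf hSne h j, mul_comm]
  · rw [dif_neg h, vl_eq_zero x h, map_zero, zero_mul, mul_zero]

end StairAux2
section StairAux3

variable {F : Type} [Field F] {n : ℕ} {S T : Fin n → Set (ℝ × ℝ)}
  {hS : ∀ i, UpClosed (S i)} {hT : ∀ j, UpClosed (T j)} {ε : ℝ}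

theorem IsStaircase.nonempty {U : Set (ℝ × ℝ)} (h : IsStaircase U) : U.Nonempty := by
  obtain ⟨A, ⟨a, ha⟩, rfl⟩ := h
  exact ⟨a, Set.mem_biUnion ha (le_refl a)⟩

theorem IsStaircase.exists_bound {U : Set (ℝ × ℝ)} (h : IsStaircase U) :
    ∃ a : ℝ × ℝ, ∀ q, a ≤ q → q ∈ U := by
  obtain ⟨A, hA, rfl⟩ := h
  refine ⟨A.sup' hA id, fun q hq => ?_⟩
  exact Set.mem_biUnion hA.choose_spec (le_trans (Finset.le_sup' id hA.choose_spec) hq)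

/-- a point above which all the staircases contain everything -/
theorem exists_big (hn : 1 ≤ n) (hS' : ∀ i, IsStaircase (S i))
    (hT' : ∀ j, IsStaircase (T j)) :
    ∃ u : ℝ × ℝ, ∀ q, u ≤ q → ∀ k, q ∈ S k ∧ q ∈ T k := by
  have : Nonempty (Fin n) := ⟨⟨0, hn⟩⟩
  choose a ha using fun i => (hS' i).exists_bound
  choose b hb using fun j => (hT' j).exists_bound
  refine ⟨Finset.univ.sup' Finset.univ_nonempty (fun k => a k ⊔ b k), fun q hq k => ?_⟩
  have hk : a k ⊔ b k ≤ q :=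
    le_trans (Finset.le_sup' (fun k => a k ⊔ b k) (Finset.mem_univ k)) hq
  exact ⟨ha k q (le_trans le_sup_left hk), hb k q (le_trans le_sup_right hk)⟩

theorem le_shift {p : ℝ × ℝ} {δ : ℝ} (hδ : 0 ≤ δ) : p ≤ p + (δ, δ) := by
  rw [Prod.le_def]
  constructor <;> simp [hδ]

/-- solvability extracted from the trivial cokernel condition -/
theorem solve (f : ∀ p : ℝ × ℝ,
      (stairSum F S hS).space p →ₗ[F] (stairSum F T hT).space (p + (ε, ε)))
    (hf : IsHomShift (stairSum F S hS) (stairSum F T hT) ε f)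
    (hSne : ∀ i, (S i).Nonempty)
    (hcok : TrivialCokerS (stairSum F S hS) (stairSum F T hT) ε (2*ε) f)
    (hε : 0 ≤ ε) (p : ℝ × ℝ) (j : Fin n) (hj : p + (ε, ε) ∈ T j) :
    ∃ w : Fin n → F, (∀ i, p + (2*ε, 2*ε) ∉ S i → w i = 0) ∧
      ∀ j', ∑ i, cMat f hSne j' i * w i = if j' = j then (1:F) else 0 := by
  have h : p + (ε, ε) ≤ p + (2*ε, 2*ε) + (ε, ε) := by
    rw [Prod.le_def]
    constructor <;> · simp only [Prod.fst_add, Prod.snd_add]; linarith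
  obtain ⟨x, hx⟩ := hcok p (delta T hT (p + (ε, ε)) j hj) h
  refine ⟨fun i => vl x i, fun i hi => vl_eq_zero x hi, fun j' => ?_⟩
  have h1 := congrArg (fun z => vl z j') hx
  rw [f_apply_val f hf hSne _ x j'] at h1
  rw [h1, map_val, delta_val]

/-- invertibility of the matrix of `f` -/
theorem exists_inv (f : ∀ p : ℝ × ℝ,
      (stairSum F S hS).space p →ₗ[F] (stairSum F T hT).space (p + (ε, ε)))
    (hf : IsHomShift (stairSum F S hS) (stairSum F T hT) ε f)
    (hSne : ∀ i, (S i).Nonempty)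
    (hcok : TrivialCokerS (stairSum F S hS) (stairSum F T hT) ε (2*ε) f)
    (hε : 0 ≤ ε) (hbig : ∃ u : ℝ × ℝ, ∀ q, u ≤ q → ∀ k, q ∈ S k ∧ q ∈ T k) :
    ∃ D : Matrix (Fin n) (Fin n) F,
      cMat f hSne * D = 1 ∧ D * cMat f hSne = 1 := by
  classical
  obtain ⟨u, hu⟩ := hbig
  have hj : ∀ j : Fin n, u + (ε, ε) ∈ T j := fun j => (hu _ (le_shift hε) j).2
  choose w hw0 hw using fun j => solve f hf hSne hcok hε u j (hj j)
  refine ⟨Matrix.of fun i j => w j i, ?_, ?_⟩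
  · ext j' j
    rw [Matrix.mul_apply, Matrix.one_apply]
    simpa using hw j j'
  · rw [← mul_eq_one_comm]
    ext j' j
    rw [Matrix.mul_apply, Matrix.one_apply]
    simpa using hw j j'

/-- support condition for the inverse matrix -/
theorem inv_support (f : ∀ p : ℝ × ℝ,
      (stairSum F S hS).space p →ₗ[F] (stairSum F T hT).space (p + (ε, ε)))
    (hf : IsHomShift (stairSum F S hS) (stairSum F T hT) ε f)
    (hSne : ∀ i, (S i).Nonempty)
    (hcok : TrivialCokerS (stairSum F S hS) (stairSum F T hT) ε (2*ε) f)
    (hε : 0 ≤ ε) {D : Matrix (Fin n) (Fin n) F} (hD : D * cMat f hSne = 1)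
    {p : ℝ × ℝ} {j i : Fin n} (hpj : p ∈ T j) (hpi : p + (ε, ε) ∉ S i) :
    D i j = 0 := by
  classical
  have e1 : p - (ε, ε) + (ε, ε) = p := by abel
  have e2 : p - (ε, ε) + (2*ε, 2*ε) = p + (ε, ε) := by
    rw [Prod.ext_iff]
    constructor <;> · simp only [Prod.fst_add, Prod.snd_add, Prod.fst_sub, Prod.snd_sub]
                      ring
  obtain ⟨w, hw0, hw⟩ := solve f hf hSne hcok hε (p - (ε, ε)) j (by rwa [e1])
  have key : ∀ i', w i' = D i' j := by
    intro i'
    have h1 : w i' = ∑ i'', (D * cMat f hSne) i' i'' * w i'' := by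
      rw [hD]
      simp [Matrix.one_apply]
    rw [h1]
    simp_rw [Matrix.mul_apply, Finset.sum_mul, mul_assoc]
    rw [Finset.sum_comm]
    simp_rw [← Finset.mul_sum, hw]
    simp
  rw [← key i]
  exact hw0 i (by rwa [e2])

end StairAux3
section StairAux4

variable {F : Type} [Field F] {n : ℕ} {S T : Fin n → Set (ℝ × ℝ)}
  {hS : ∀ i, UpClosed (S i)} {hT : ∀ j, UpClosed (T j)} {ε : ℝ}

/-- the homomorphism `N → M^ε` associated to a matrix `D` with the right support -/
noncomputable def gMap (hS : ∀ i, UpClosed (S i)) (hT : ∀ j, UpClosed (T j)) (ε : ℝ)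
    (D : Matrix (Fin n) (Fin n) F)
    (hD : ∀ (p : ℝ × ℝ) (j i : Fin n), p ∈ T j → p + (ε, ε) ∉ S i → D i j = 0)
    (p : ℝ × ℝ) : (stairSum F T hT).space p →ₗ[F] (stairSum F S hS).space (p + (ε, ε)) where
  toFun y := fun i => ⟨∑ j, D i j * vl y j, mem_lineAt (fun h =>
    Finset.sum_eq_zero fun j _ => by
      by_cases hpj : p ∈ T j
      · rw [hD p j i hpj h, zero_mul]
      · rw [vl_eq_zero y hpj, mul_zero])⟩
  map_add' y z := funext fun i => Subtype.ext (by
    show ∑ j, D i j * vl (y + z) j = (∑ j, D i j * vl y j) + ∑ j, D i j * vl z j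
    rw [← Finset.sum_add_distrib]
    exact Finset.sum_congr rfl fun j _ => by
      show D i j * (vl y j + vl z j) = _
      ring)
  map_smul' a y := funext fun i => Subtype.ext (by
    show ∑ j, D i j * vl (a • y) j = a * ∑ j, D i j * vl y j
    rw [Finset.mul_sum]
    exact Finset.sum_congr rfl fun j _ => by rw [vl_smul]; ring)

theorem gMap_val (D : Matrix (Fin n) (Fin n) F)
    (hD : ∀ (p : ℝ × ℝ) (j i : Fin n), p ∈ T j → p + (ε, ε) ∉ S i → D i j = 0)
    (p : ℝ × ℝ) (y : (stairSum F T hT).space p) (i : Fin n) :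
    vl (gMap hS hT ε D hD p y) i = ∑ j, D i j * vl y j := rfl

theorem gMap_isHomShift (D : Matrix (Fin n) (Fin n) F)
    (hD : ∀ (p : ℝ × ℝ) (j i : Fin n), p ∈ T j → p + (ε, ε) ∉ S i → D i j = 0) :
    IsHomShift (stairSum F T hT) (stairSum F S hS) ε (gMap hS hT ε D hD) := by
  intro p q h
  refine LinearMap.ext fun y => ext_val fun i => ?_
  rw [LinearMap.comp_apply, LinearMap.comp_apply, map_val, gMap_val, gMap_val]
  exact Finset.sum_congr rfl fun j _ => by rw [map_val]

end StairAux4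

/-- **One-sided characterization of interleavings for sums of `n` staircase modules.**
There exists a morphism `f : M → N^ε` with `2ε`-trivial cokernel iff `M` and `N` are
`ε`-interleaved. -/
theorem stmt_16 (F : Type) [Field F] [Fintype F] (n : ℕ) (hn : 1 ≤ n)
    (S T : Fin n → Set (ℝ × ℝ))
    (hS : ∀ i, IsStaircase (S i)) (hT : ∀ j, IsStaircase (T j))
    (ε : ℝ) (hε : 0 ≤ ε) :
    (∃ f, IsHomShift (stairSum F S fun i => (hS i).upClosed)
            (stairSum F T fun j => (hT j).upClosed) ε f ∧
          TrivialCokerS (stairSum F S fun i => (hS i).upClosed)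
            (stairSum F T fun j => (hT j).upClosed) ε (2*ε) f) ↔
    Interleaved (stairSum F S fun i => (hS i).upClosed)
      (stairSum F T fun j => (hT j).upClosed) ε := by
  constructor
  · rintro ⟨f, hf, hcok⟩
    have hSne : ∀ i, (S i).Nonempty := fun i => (hS i).nonempty
    obtain ⟨D, hCD, hDC⟩ := exists_inv f hf hSne hcok hε (exists_big hn hS hT)
    have hDsupp : ∀ (p : ℝ × ℝ) (j i : Fin n), p ∈ T j → p + (ε, ε) ∉ S i → D i j = 0 :=
      fun p j i hpj hpi => inv_support f hf hSne hcok hε hDC hpj hpi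
    refine ⟨f, gMap _ _ ε D hDsupp, hf, gMap_isHomShift D hDsupp, ?_, ?_⟩
    · intro p h
      refine LinearMap.ext fun x => ext_val fun i => ?_
      rw [LinearMap.comp_apply, gMap_val, map_val]
      calc ∑ j, D i j * vl (f p x) j
          = ∑ j, D i j * ∑ i', cMat f hSne j i' * vl x i' :=
            Finset.sum_congr rfl fun j _ => by rw [f_apply_val f hf hSne]
        _ = vl x i := by
            simp_rw [Finset.mul_sum]
            rw [Finset.sum_comm]
            simp_rw [← mul_assoc, ← Finset.sum_mul]
            simp_rw [show ∀ i', (∑ j, D i j * cMat f hSne j i') = (D * cMat f hSne) i i'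
              from fun i' => (Matrix.mul_apply).symm, hDC]
            simp [Matrix.one_apply]
    · intro p h
      refine LinearMap.ext fun y => ext_val fun j' => ?_
      rw [LinearMap.comp_apply, map_val, f_apply_val f hf hSne]
      calc ∑ i, cMat f hSne j' i * vl (gMap _ _ ε D hDsupp p y) i
          = ∑ i, cMat f hSne j' i * ∑ j, D i j * vl y j :=
            Finset.sum_congr rfl fun i _ => by rw [gMap_val]
        _ = vl y j' := by
            simp_rw [Finset.mul_sum]
            rw [Finset.sum_comm]
            simp_rw [← mul_assoc, ← Finset.sum_mul]
            simp_rw [show ∀ j, (∑ i, cMat f hSne j' i * D i j) = (cMat f hSne * D) j' j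
              from fun j => (Matrix.mul_apply).symm, hCD]
            simp [Matrix.one_apply]
  · rintro ⟨f, g, hf, hg, hgf, hfg⟩
    refine ⟨f, hf, ?_⟩
    intro p y h
    have h2 : p + (ε, ε) + (ε, ε) ≤ p + (2*ε, 2*ε) := le_of_eq (by
      rw [Prod.ext_iff]
      constructor <;> · simp only [Prod.fst_add, Prod.snd_add]; ring)
    refine ⟨(stairSum F S fun i => (hS i).upClosed).map h2 (g (p + (ε, ε)) y), ?_⟩
    have hnat := LinearMap.congr_fun (hf h2) (g (p + (ε, ε)) y)
    rw [LinearMap.comp_apply, LinearMap.comp_apply] at hnat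
    rw [← hnat]
    have h3 : p + (ε, ε) ≤ p + (ε, ε) + (ε, ε) + (ε, ε) :=
      le_trans (le_shift hε) (le_shift hε)
    have hcomp := LinearMap.congr_fun (hfg (p + (ε, ε)) h3) y
    rw [LinearMap.comp_apply] at hcomp
    rw [hcomp]
    exact LinearMap.congr_fun
      ((stairSum F T fun j => (hT j).upClosed).map_comp h3
        (add_le_add h2 (le_refl ((ε : ℝ), (ε : ℝ))))) y
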